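/- Let F be a set-valued map from a normed space X to R^p, Lipschitz around x, y ∈ F(x) a properly minimal element (y ∈ E(F(x),P) and T_{F(x)+P}(y) ∩ (-P) = {0}). Then DF↑((x,y); 0) ∩ (-P) = {0}, where F↑ = F + P. -/

import Mathlib

open Filter Topology Pointwise

/-- Contingent cone to `S` at `z`. -/
def contingentCone {E : Type*} [NormedAddCommGroup E] [NormedSpace ℝ E]
    (S : Set E) (z : E) : Set E :=
  {v | ∃ h : ℕ → ℝ, ∃ vk : ℕ → E, (∀ k, 0 < h k) ∧ Tendsto h atTop (𝓝 0) ∧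
    Tendsto vk atTop (𝓝 v) ∧ ∀ k, z + h k • vk k ∈ S}

/-- Recession cone of `S`. -/
def recessionCone {E : Type*} [NormedAddCommGroup E] [NormedSpace ℝ E]
    (S : Set E) : Set E :=
  {y | ∃ h : ℕ → ℝ, ∃ yk : ℕ → E, (∀ k, 0 < h k) ∧ Tendsto h atTop (𝓝 0) ∧
    (∀ k, yk k ∈ S) ∧ Tendsto (fun k => h k • yk k) atTop (𝓝 y)}

/-- Set of minimal elements of `S` with respect to the ordering cone `P`. -/
def minimalSet {E : Type*} [NormedAddCommGroup E] [NormedSpace ℝ E]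
    (S P : Set E) : Set E :=
  {y | y ∈ S ∧ ((fun d => y - d) '' P) ∩ S = {y}}

/-- Contingent derivative of a set-valued map `F` at `(x, y)` in direction `v`. -/
def contDeriv {X E : Type*} [NormedAddCommGroup X] [NormedSpace ℝ X]
    [NormedAddCommGroup E] [NormedSpace ℝ E]
    (F : X → Set E) (x : X) (y : E) (v : X) : Set E :=
  {w | ∃ h : ℕ → ℝ, ∃ vk : ℕ → X, ∃ wk : ℕ → E, (∀ k, 0 < h k) ∧
    Tendsto h atTop (𝓝 0) ∧ Tendsto vk atTop (𝓝 v) ∧ Tendsto wk atTop (𝓝 w) ∧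
    ∀ k, y + h k • wk k ∈ F (x + h k • vk k)}

/-- `F` is Lipschitz (with constant `l`) on a neighborhood of `x`. -/
def LipschitzAround {X E : Type*} [NormedAddCommGroup X] [NormedSpace ℝ X]
    [NormedAddCommGroup E] [NormedSpace ℝ E]
    (F : X → Set E) (x : X) (l : ℝ) : Prop :=
  ∃ O ∈ 𝓝 x, ∀ x1 ∈ O, ∀ x2 ∈ O,
    F x1 ⊆ F x2 + Metric.closedBall (0 : E) (l * ‖x1 - x2‖)

theorem stmt13 {p : ℕ} {X : Type*} [NormedAddCommGroup X] [NormedSpace ℝ X]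
    (P : Set (EuclideanSpace ℝ (Fin p)))
    (hPconv : Convex ℝ P) (hPcone : ∀ (c : ℝ), 0 ≤ c → ∀ x ∈ P, c • x ∈ P)
    (hPclosed : IsClosed P) (hP0 : (0 : EuclideanSpace ℝ (Fin p)) ∈ P)
    (hPpointed : P ∩ (-P) = {0}) (hPint : (interior P).Nonempty)
    (F : X → Set (EuclideanSpace ℝ (Fin p))) (x : X) (l : ℝ) (hl : 0 ≤ l)
    (hLip : LipschitzAround F x l)
    (y : EuclideanSpace ℝ (Fin p))
    (hymin : y ∈ minimalSet (F x) P)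
    (hyproper : contingentCone (F x + P) y ∩ (-P) = {0}) :
    contDeriv (fun x' => F x' + P) x y 0 ∩ (-P) = {0} := by
  ext w
  simp only [Set.mem_inter_iff, Set.mem_singleton_iff]
  constructor
  · rintro ⟨⟨h, vk, wk, hpos, hh0, hv0, hw, hmem⟩, hwP⟩
    obtain ⟨O, hO, hLipO⟩ := hLip
    have hxmemO : x ∈ O := mem_of_mem_nhds hO
    have htend : Tendsto (fun k => x + h k • vk k) atTop (𝓝 x) := by
      have h1 : Tendsto (fun k => h k • vk k) atTop (𝓝 ((0:ℝ) • (0:X))) :=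
        hh0.smul hv0
      simpa using tendsto_const_nhds.add h1
    have hxO : ∀ᶠ k in atTop, x + h k • vk k ∈ O := htend.eventually_mem hO
    obtain ⟨N, hN⟩ := eventually_atTop.mp hxO
    have key : ∀ k : ℕ, ∃ b : EuclideanSpace ℝ (Fin p),
        ‖b‖ ≤ l * ‖vk (k + N)‖ ∧
        y + h (k + N) • (wk (k + N) - b) ∈ F x + P := by
      intro k
      have hk : x + h (k + N) • vk (k + N) ∈ O := hN (k + N) (Nat.le_add_left N k)
      have hm := hmem (k + N)
      rw [Set.mem_add] at hm
      obtain ⟨a, ha, q, hq, haq⟩ := hm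
      have hsub := hLipO _ hk x hxmemO ha
      rw [Set.mem_add] at hsub
      obtain ⟨f, hf, b, hb, hfb⟩ := hsub
      have hpos' := hpos (k + N)
      have hbnorm : ‖b‖ ≤ l * (h (k + N) * ‖vk (k + N)‖) := by
        have := Metric.mem_closedBall.mp hb
        simp only [dist_zero_right] at this
        calc ‖b‖ ≤ l * ‖x + h (k + N) • vk (k + N) - x‖ := this
          _ = l * (h (k + N) * ‖vk (k + N)‖) := by
              rw [add_sub_cancel_left, norm_smul, Real.norm_eq_abs,
                abs_of_pos hpos']
      refine ⟨(h (k + N))⁻¹ • b, ?_, ?_⟩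
      · rw [norm_smul, Real.norm_eq_abs, abs_of_pos (inv_pos.mpr hpos')]
        calc (h (k + N))⁻¹ * ‖b‖ ≤ (h (k + N))⁻¹ * (l * (h (k + N) * ‖vk (k + N)‖)) := by
              apply mul_le_mul_of_nonneg_left hbnorm (le_of_lt (inv_pos.mpr hpos'))
          _ = l * ‖vk (k + N)‖ := by field_simp
      · have heq : y + h (k + N) • (wk (k + N) - (h (k + N))⁻¹ • b)
            = f + q := by
          have h1 : y + h (k + N) • wk (k + N) = f + b + q := by
            rw [hfb, haq]
          rw [smul_sub, smul_inv_smul₀ (ne_of_gt hpos')]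
          linear_combination (norm := module) h1
        rw [heq]
        exact Set.add_mem_add hf hq
    choose b hbnorm hbmem using key
    have hcorr : Tendsto b atTop (𝓝 0) := by
      apply squeeze_zero_norm hbnorm
      have : Tendsto (fun k => ‖vk (k + N)‖) atTop (𝓝 ‖(0:X)‖) :=
        (hv0.comp (tendsto_add_atTop_nat N)).norm
      simpa using this.const_mul l
    have hwk' : Tendsto (fun k => wk (k + N) - b k) atTop (𝓝 w) := by
      have h1 : Tendsto (fun k => wk (k + N)) atTop (𝓝 w) :=
        hw.comp (tendsto_add_atTop_nat N)
      simpa using h1.sub hcorr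
    have hmemT : w ∈ contingentCone (F x + P) y := by
      exact ⟨fun k => h (k + N), fun k => wk (k + N) - b k,
        fun k => hpos (k + N), hh0.comp (tendsto_add_atTop_nat N), hwk',
        fun k => hbmem k⟩
    have : w ∈ contingentCone (F x + P) y ∩ (-P) := ⟨hmemT, hwP⟩
    rw [hyproper] at this
    exact this
  · rintro rfl
    refine ⟨⟨fun k => (k + 1 : ℝ)⁻¹, fun _ => 0, fun _ => 0, ?_, ?_, ?_, ?_, ?_⟩, ?_⟩
    · intro k; positivity
    · exact tendsto_one_div_add_atTop_nhds_zero_nat.congr (by intro k; simp [one_div])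
    · exact tendsto_const_nhds
    · exact tendsto_const_nhds
    · intro k
      simp only [smul_zero, add_zero]
      simpa using Set.add_mem_add hymin.1 hP0
    · simp [Set.mem_neg, hP0]
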